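/- If D is a Ryser design of order v, then there exist integers r₁ and r₂ with r₁ ≠ r₂ and r₁ + r₂ = v + 1 such that every point of D occurs either in exactly r₁ blocks or in exactly r₂ blocks. -/

import Mathlib

open scoped symmDiff

/-- Block complementation of a family of blocks with respect to a block `A`:
the new family is `{A} ∪ {A ∆ B : B ∈ L, B ≠ A}`. -/
def blockComp {α : Type*} [DecidableEq α] (A : Finset α) (L : Finset (Finset α)) :
    Finset (Finset α) :=
  insert A ((L.erase A).image (fun B => A ∆ B))

/-- The replication number of a point `x`: the number of blocks of `L` containing `x`. -/
def repl {α : Type*} [DecidableEq α] (L : Finset (Finset α)) (x : α) : ℕ :=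
  (L.filter (fun B => x ∈ B)).card

/-- A Ryser design on point set `X` with block family `L` and index `lam`. -/
def IsRyserDesign {α : Type*} [DecidableEq α] (X : Finset α) (L : Finset (Finset α))
    (lam : ℕ) : Prop :=
  1 ≤ lam ∧ L.card = X.card ∧ (∀ B ∈ L, B ⊆ X) ∧
    (∀ B₁ ∈ L, ∀ B₂ ∈ L, B₁ ≠ B₂ → (B₁ ∩ B₂).card = lam) ∧
    (∀ B ∈ L, lam < B.card) ∧
    (∃ B₁ ∈ L, ∃ B₂ ∈ L, B₁.card ≠ B₂.card)

/-- A symmetric design on point set `X` with block family `L`, block size `k` and index `lam`. -/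
def IsSymmetricDesign {α : Type*} [DecidableEq α] (X : Finset α) (L : Finset (Finset α))
    (k lam : ℕ) : Prop :=
  1 ≤ lam ∧ L.card = X.card ∧ (∀ B ∈ L, B ⊆ X) ∧
    (∀ B₁ ∈ L, ∀ B₂ ∈ L, B₁ ≠ B₂ → (B₁ ∩ B₂).card = lam) ∧
    (∀ B ∈ L, B.card = k) ∧ lam < k

theorem ryser_woodall' {α : Type*} [DecidableEq α] (lam : ℕ)
    (X : Finset α) (L : Finset (Finset α))
    (hlam : 1 ≤ lam) (hcard : L.card = X.card) (hsub : ∀ B ∈ L, B ⊆ X)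
    (hint : ∀ B₁ ∈ L, ∀ B₂ ∈ L, B₁ ≠ B₂ → (B₁ ∩ B₂).card = lam)
    (hlt : ∀ B ∈ L, lam < B.card)
    (hex : ∃ B₁ ∈ L, ∃ B₂ ∈ L, B₁.card ≠ B₂.card) :
    ∃ r₁ r₂ : ℕ, r₁ ≠ r₂ ∧ r₁ + r₂ = X.card + 1 ∧
      ∀ x ∈ X, (L.filter (fun B => x ∈ B)).card = r₁ ∨
        (L.filter (fun B => x ∈ B)).card = r₂ := by
  classical
  obtain ⟨B₁, hB₁, B₂, hB₂, hkne⟩ := hex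
  set P := {x // x ∈ X} with hP
  set Q := {B // B ∈ L} with hQdef
  let e : Q → ℚ := fun B => ((B : Finset α).card : ℚ) - lam
  have he : ∀ B : Q, 0 < e B := by
    intro B
    have := hlt B.1 B.2
    simp only [e, sub_pos, Nat.cast_lt]
    exact this
  have he0 : ∀ B : Q, e B ≠ 0 := fun B => (he B).ne'
  have hk_e : ∀ B : Q, ((B : Finset α).card : ℚ) = e B + lam := by
    intro B; simp [e]
  let ρ : α → ℚ := fun x => ∑ B : Q, if x ∈ (B : Finset α) then (e B)⁻¹ else 0
  have hρx : ∀ x : α, ρ x = ∑ B : Q, if x ∈ (B : Finset α) then (e B)⁻¹ else 0 :=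
    fun _ => rfl
  let σ : ℚ := ∑ B : Q, (e B)⁻¹
  have hσx : σ = ∑ B : Q, (e B)⁻¹ := rfl
  have hσ0 : 0 ≤ σ := Finset.sum_nonneg fun B _ => (inv_pos.mpr (he B)).le
  let s : ℚ := 1 + lam * σ
  have hsx : s = 1 + lam * σ := rfl
  have hs : 0 < s := by
    have : (0:ℚ) ≤ lam * σ := mul_nonneg (by positivity) hσ0
    simp only [s]; linarith
  let β : ℚ := lam / s
  have hβs : β * s = lam := div_mul_cancel₀ _ hs.ne'
  have hβpos : 0 < β := div_pos (by exact_mod_cast hlam) hs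
  -- generic summation lemma
  have key : ∀ (C : Finset α), C ⊆ X → ∀ (g : α → ℚ),
      (∑ x : P, if (x : α) ∈ C then g x else 0) = ∑ x ∈ C, g x := by
    intro C hC g
    rw [Finset.sum_coe_sort X (fun x => if x ∈ C then g x else 0), Finset.sum_ite_mem,
      Finset.inter_eq_right.mpr hC]
  -- intersections
  have hinter : ∀ B C : Q, B ≠ C → (((B:Finset α) ∩ (C:Finset α)).card : ℚ) = lam := by
    intro B C h
    have h2 : (B:Finset α) ≠ (C:Finset α) := fun hh => h (Subtype.ext hh)
    exact_mod_cast hint B.1 B.2 C.1 C.2 h2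
  -- (E1): sum of ρ over a block equals s
  have hE1 : ∀ C : Q, ∑ x ∈ (C : Finset α), ρ x = s := by
    intro C
    have hterm : ∀ B : Q, (∑ x ∈ (C:Finset α), if x ∈ (B:Finset α) then (e B)⁻¹ else 0)
        = (lam : ℚ) * (e B)⁻¹ + (if B = C then 1 else 0) := by
      intro B
      rw [Finset.sum_ite_mem, Finset.sum_const, nsmul_eq_mul]
      by_cases h : B = C
      · subst h
        rw [Finset.inter_self, if_pos rfl, hk_e B, add_mul, mul_inv_cancel₀ (he0 B)]
        ring
      · rw [if_neg h, Finset.inter_comm, hinter B C h]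
        ring
    calc ∑ x ∈ (C:Finset α), ρ x
        = ∑ B : Q, ∑ x ∈ (C:Finset α), (if x ∈ (B:Finset α) then (e B)⁻¹ else 0) :=
          Finset.sum_comm
      _ = ∑ B : Q, ((lam : ℚ) * (e B)⁻¹ + (if B = C then 1 else 0)) :=
          Finset.sum_congr rfl fun B _ => hterm B
      _ = (∑ B : Q, (lam : ℚ) * (e B)⁻¹) + ∑ B : Q, (if B = C then (1:ℚ) else 0) :=
          Finset.sum_add_distrib
      _ = s := by
          rw [← Finset.mul_sum]
          have h1 : (∑ B : Q, if B = C then (1:ℚ) else 0) = 1 := by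
            rw [Finset.sum_eq_single C (fun b _ hb => by simp [hb]) (fun h => absurd (Finset.mem_univ C) h)]
            simp
          rw [h1, hsx, hσx]; ring
  -- total sum of ρ
  have hQcard : ((Fintype.card Q : ℕ) : ℚ) = (X.card : ℚ) := by
    have h1 : Fintype.card Q = L.card := Fintype.card_coe L
    rw [h1, hcard]
  have hρsum : (∑ x : P, ρ (x : α)) = (X.card : ℚ) + lam * σ := by
    have hterm : ∀ B : Q, (∑ x : P, if (x:α) ∈ (B:Finset α) then (e B)⁻¹ else 0)
        = 1 + (lam : ℚ) * (e B)⁻¹ := by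
      intro B
      calc (∑ x : P, if (x:α) ∈ (B:Finset α) then (e B)⁻¹ else 0)
          = ∑ x ∈ (B:Finset α), (e B)⁻¹ := key (B:Finset α) (hsub B.1 B.2) (fun _ => (e B)⁻¹)
        _ = ((B:Finset α).card : ℚ) * (e B)⁻¹ := by rw [Finset.sum_const, nsmul_eq_mul]
        _ = 1 + (lam : ℚ) * (e B)⁻¹ := by
            rw [hk_e B, add_mul, mul_inv_cancel₀ (he0 B)]
    calc (∑ x : P, ρ (x:α))
        = ∑ B : Q, ∑ x : P, (if (x:α) ∈ (B:Finset α) then (e B)⁻¹ else 0) := Finset.sum_comm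
      _ = ∑ B : Q, (1 + (lam:ℚ) * (e B)⁻¹) := Finset.sum_congr rfl fun B _ => hterm B
      _ = (∑ _B : Q, (1:ℚ)) + ∑ B : Q, (lam:ℚ) * (e B)⁻¹ := Finset.sum_add_distrib
      _ = (X.card : ℚ) + lam * σ := by
          rw [← Finset.mul_sum, Finset.sum_const, nsmul_eq_mul, mul_one, Finset.card_univ,
            hQcard, hσx]
  -- matrices
  let N : Matrix P Q ℚ := fun x B => if (x : α) ∈ (B : Finset α) then 1 else 0
  let M : Matrix Q P ℚ :=
    fun B x => (e B)⁻¹ * ((if (x:α) ∈ (B:Finset α) then 1 else 0) - β * ρ x)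
  have hMN : M * N = 1 := by
    ext B C
    rw [Matrix.mul_apply, Matrix.one_apply]
    have hterm : ∀ x : P, M B x * N x C =
        (if (x:α) ∈ (C:Finset α) then
          (e B)⁻¹ * ((if (x:α) ∈ (B:Finset α) then 1 else 0) - β * ρ (x:α)) else 0) := by
      intro x
      by_cases h : (x:α) ∈ (C:Finset α) <;> simp [N, M, h]
    calc (∑ x : P, M B x * N x C)
        = ∑ x : P, (if (x:α) ∈ (C:Finset α) then
            (e B)⁻¹ * ((if (x:α) ∈ (B:Finset α) then 1 else 0) - β * ρ (x:α)) else 0) :=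
          Finset.sum_congr rfl fun x _ => hterm x
      _ = ∑ x ∈ (C:Finset α), (e B)⁻¹ * ((if x ∈ (B:Finset α) then 1 else 0) - β * ρ x) :=
          key (C:Finset α) (hsub C.1 C.2)
            (fun y => (e B)⁻¹ * ((if y ∈ (B:Finset α) then 1 else 0) - β * ρ y))
      _ = (e B)⁻¹ * ((∑ x ∈ (C:Finset α), if x ∈ (B:Finset α) then (1:ℚ) else 0)
            - β * ∑ x ∈ (C:Finset α), ρ x) := by
          rw [← Finset.mul_sum, Finset.sum_sub_distrib, ← Finset.mul_sum]
      _ = (e B)⁻¹ * ((((B:Finset α) ∩ (C:Finset α)).card : ℚ) - (lam:ℚ)) := by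
          rw [hE1 C, hβs]
          have h1 : (∑ x ∈ (C:Finset α), if x ∈ (B:Finset α) then (1:ℚ) else 0)
              = (((B:Finset α) ∩ (C:Finset α)).card : ℚ) := by
            rw [Finset.sum_ite_mem, Finset.sum_const, Finset.inter_comm]
            simp
          rw [h1]
      _ = if B = C then 1 else 0 := by
          by_cases h : B = C
          · subst h
            rw [Finset.inter_self, if_pos rfl]
            have h2 : ((B:Finset α).card : ℚ) - (lam:ℚ) = e B := by rw [hk_e B]; ring
            rw [h2, inv_mul_cancel₀ (he0 B)]
          · rw [hinter B C h, if_neg h, sub_self, mul_zero]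
  have ecard : Fintype.card P = Fintype.card Q := by
    have h1 : Fintype.card P = X.card := Fintype.card_coe X
    have h2 : Fintype.card Q = L.card := Fintype.card_coe L
    rw [h1, h2, hcard]
  have eqv : P ≃ Q := Fintype.equivOfCardEq ecard
  have hNM : N * M = 1 := by
    have h1 : M.submatrix ⇑eqv ⇑(Equiv.refl P) * N.submatrix ⇑(Equiv.refl P) ⇑eqv = 1 := by
      rw [Matrix.submatrix_mul_equiv M N ⇑eqv (Equiv.refl P) ⇑eqv, hMN,
        Matrix.submatrix_one_equiv]
    have h2 := mul_eq_one_comm.mp h1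
    rwa [Matrix.submatrix_mul_equiv N M ⇑(Equiv.refl P) eqv ⇑(Equiv.refl P), Equiv.coe_refl,
      Matrix.submatrix_id_id] at h2
  -- diagonal: ρ x * (1 - β ρ x) = 1
  have hQuad : ∀ x : P, ρ (x:α) * (1 - β * ρ (x:α)) = 1 := by
    intro x
    have hd : (N * M) x x = (1 : Matrix P P ℚ) x x := by rw [hNM]
    rw [Matrix.mul_apply, Matrix.one_apply_eq] at hd
    have hterm : ∀ B : Q, N x B * M B x =
        (if (x:α) ∈ (B:Finset α) then (e B)⁻¹ else 0) * (1 - β * ρ (x:α)) := by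
      intro B
      by_cases h : (x:α) ∈ (B:Finset α) <;> simp [N, M, h]
    calc ρ (x:α) * (1 - β * ρ (x:α))
        = (∑ B : Q, if (x:α) ∈ (B:Finset α) then (e B)⁻¹ else 0) * (1 - β * ρ (x:α)) := by
          rw [← hρx]
      _ = ∑ B : Q, (if (x:α) ∈ (B:Finset α) then (e B)⁻¹ else 0) * (1 - β * ρ (x:α)) :=
          Finset.sum_mul _ _ _
      _ = ∑ B : Q, N x B * M B x := Finset.sum_congr rfl fun B _ => (hterm B).symm
      _ = 1 := hd
  -- row sums: repl = 1 + μ ρ x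
  let μ : ℚ := β * ((X.card : ℚ) - 1)
  have hμβ : (lam : ℚ) - β * ((X.card : ℚ) + lam * σ) = -μ := by
    have h1 : ((X.card : ℚ) + lam * σ) = ((X.card : ℚ) - 1) + s := by rw [hsx]; ring
    rw [h1, mul_add, hβs]
    simp only [μ]
    ring
  have hRepl : ∀ x : P, ((L.filter (fun B => (x:α) ∈ B)).card : ℚ) = 1 + μ * ρ (x:α) := by
    intro x
    have hone : (∑ y : P, (1 : Matrix P P ℚ) x y) = 1 := by
      rw [Finset.sum_eq_single x (fun b _ hb => Matrix.one_apply_ne (Ne.symm hb))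
        (fun h => absurd (Finset.mem_univ x) h)]
      simp [Matrix.one_apply]
    have hMsum : ∀ B : Q, (∑ y : P, M B y) =
        (e B)⁻¹ * (((B:Finset α).card : ℚ) - β * ((X.card : ℚ) + lam * σ)) := by
      intro B
      calc (∑ y : P, M B y)
          = ∑ y : P, (e B)⁻¹ * ((if (y:α) ∈ (B:Finset α) then 1 else 0) - β * ρ (y:α)) := rfl
        _ = (e B)⁻¹ * ((∑ y : P, (if (y:α) ∈ (B:Finset α) then (1:ℚ) else 0))
              - β * ∑ y : P, ρ (y:α)) := by
            rw [← Finset.mul_sum, Finset.sum_sub_distrib, ← Finset.mul_sum]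
        _ = (e B)⁻¹ * (((B:Finset α).card : ℚ) - β * ((X.card : ℚ) + lam * σ)) := by
            rw [hρsum]
            congr 2
            calc (∑ y : P, (if (y:α) ∈ (B:Finset α) then (1:ℚ) else 0))
                = ∑ y ∈ (B:Finset α), (1:ℚ) := key (B:Finset α) (hsub B.1 B.2) (fun _ => (1:ℚ))
              _ = ((B:Finset α).card : ℚ) := by rw [Finset.sum_const, nsmul_eq_mul, mul_one]
    have hterm : ∀ B : Q, N x B * (∑ y : P, M B y) =
        (if (x:α) ∈ (B:Finset α) then (1:ℚ) else 0)
          + ((lam:ℚ) - β * ((X.card : ℚ) + lam * σ))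
            * (if (x:α) ∈ (B:Finset α) then (e B)⁻¹ else 0) := by
      intro B
      rw [hMsum B]
      by_cases h : (x:α) ∈ (B:Finset α)
      · simp only [N, if_pos h, one_mul]
        rw [hk_e B]
        have hrw : ∀ c : ℚ, (e B)⁻¹ * (e B + (lam:ℚ) - c)
            = 1 + ((lam:ℚ) - c) * (e B)⁻¹ := by
          intro c
          have : (e B)⁻¹ * (e B + ((lam:ℚ) - c)) = (e B)⁻¹ * e B + ((lam:ℚ) - c) * (e B)⁻¹ := by
            ring
          rw [show e B + (lam:ℚ) - c = e B + ((lam:ℚ) - c) by ring, this,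
            inv_mul_cancel₀ (he0 B)]
        exact hrw _
      · simp [N, h]
    have hr : (∑ B : Q, N x B * (∑ y : P, M B y)) = 1 := by
      calc (∑ B : Q, N x B * (∑ y : P, M B y))
          = ∑ B : Q, ∑ y : P, N x B * M B y :=
            Finset.sum_congr rfl fun B _ => Finset.mul_sum _ _ _
        _ = ∑ y : P, ∑ B : Q, N x B * M B y := Finset.sum_comm
        _ = ∑ y : P, (N * M) x y := Finset.sum_congr rfl fun y _ => (Matrix.mul_apply).symm
        _ = ∑ y : P, (1 : Matrix P P ℚ) x y := by rw [hNM]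
        _ = 1 := hone
    have hb : (∑ B : Q, if (x:α) ∈ (B:Finset α) then (1:ℚ) else 0)
        = ((L.filter (fun B => (x:α) ∈ B)).card : ℚ) := by
      calc (∑ B : Q, if (x:α) ∈ (B:Finset α) then (1:ℚ) else 0)
          = ∑ B ∈ L, (if (x:α) ∈ B then (1:ℚ) else 0) :=
            Finset.sum_coe_sort L (fun B => if (x:α) ∈ B then (1:ℚ) else 0)
        _ = ((L.filter (fun B => (x:α) ∈ B)).card : ℚ) := Finset.sum_boole _ _
    have hexp : (1:ℚ) = ((L.filter (fun B => (x:α) ∈ B)).card : ℚ) + (-μ) * ρ (x:α) := by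
      calc (1:ℚ) = ∑ B : Q, N x B * (∑ y : P, M B y) := hr.symm
        _ = ∑ B : Q, ((if (x:α) ∈ (B:Finset α) then (1:ℚ) else 0)
              + ((lam:ℚ) - β * ((X.card : ℚ) + lam * σ))
                * (if (x:α) ∈ (B:Finset α) then (e B)⁻¹ else 0)) :=
            Finset.sum_congr rfl fun B _ => hterm B
        _ = (∑ B : Q, (if (x:α) ∈ (B:Finset α) then (1:ℚ) else 0))
              + ((lam:ℚ) - β * ((X.card : ℚ) + lam * σ))
                * ∑ B : Q, (if (x:α) ∈ (B:Finset α) then (e B)⁻¹ else 0) := by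
            rw [Finset.sum_add_distrib, ← Finset.mul_sum]
        _ = ((L.filter (fun B => (x:α) ∈ B)).card : ℚ) + (-μ) * ρ (x:α) := by
            rw [hb, hμβ, ← hρx]
    have := hexp
    linarith [this]
  -- X.card ≥ 2
  have hBne : B₁ ≠ B₂ := fun h => hkne (by rw [h])
  have hv2 : 2 ≤ X.card := by
    rw [← hcard]
    exact Finset.one_lt_card.mpr ⟨B₁, hB₁, B₂, hB₂, hBne⟩
  have hμ0 : μ ≠ 0 := by
    have h1 : (1:ℚ) < (X.card : ℚ) := by exact_mod_cast hv2
    have h2 : ((X.card : ℚ) - 1) ≠ 0 := by linarith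
    exact mul_ne_zero hβpos.ne' h2
  -- ρ is nonconstant
  have hnc : ∃ x₀ : P, ∃ y₀ : P, ρ (x₀:α) ≠ ρ (y₀:α) := by
    by_contra hcon
    push_neg at hcon
    obtain ⟨x₁, hx₁⟩ := Finset.card_pos.mp (lt_of_le_of_lt (Nat.zero_le _) (hlt B₁ hB₁))
    have hx₁X : x₁ ∈ X := hsub B₁ hB₁ hx₁
    have ht0 : ρ x₁ ≠ 0 := by
      intro h
      have h2 := hQuad ⟨x₁, hx₁X⟩
      simp only at h2
      rw [h] at h2
      norm_num at h2
    have hsumB : ∀ B, B ∈ L → ((B.card : ℚ)) * ρ x₁ = s := by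
      intro B hB
      have h3 := hE1 ⟨B, hB⟩
      simp only at h3
      have hcongr : (∑ x ∈ B, ρ x) = ∑ _x ∈ B, ρ x₁ :=
        Finset.sum_congr rfl (fun x hx => hcon ⟨x, hsub B hB hx⟩ ⟨x₁, hx₁X⟩)
      rw [hcongr, Finset.sum_const, nsmul_eq_mul] at h3
      exact h3
    have h4 : ((B₁.card : ℚ)) = ((B₂.card : ℚ)) :=
      mul_right_cancel₀ ht0 ((hsumB B₁ hB₁).trans (hsumB B₂ hB₂).symm)
    exact hkne (by exact_mod_cast h4)
  obtain ⟨x₀, y₀, hxy⟩ := hnc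
  -- β (ρ x₀ + ρ y₀) = 1
  have hsum2 : β * (ρ (x₀:α) + ρ (y₀:α)) = 1 := by
    have h1 := hQuad x₀
    have h2 := hQuad y₀
    have hz : (ρ (x₀:α) - ρ (y₀:α)) * (1 - β * (ρ (x₀:α) + ρ (y₀:α))) = 0 := by
      linear_combination h1 - h2
    rcases mul_eq_zero.mp hz with h | h
    · exact absurd (sub_eq_zero.mp h) hxy
    · linarith
  refine ⟨(L.filter (fun B => (x₀:α) ∈ B)).card, (L.filter (fun B => (y₀:α) ∈ B)).card,
    ?_, ?_, ?_⟩
  · intro h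
    have h1 : ((L.filter (fun B => (x₀:α) ∈ B)).card : ℚ)
        = ((L.filter (fun B => (y₀:α) ∈ B)).card : ℚ) := by exact_mod_cast h
    rw [hRepl x₀, hRepl y₀] at h1
    have h2 : μ * (ρ (x₀:α) - ρ (y₀:α)) = 0 := by linarith
    rcases mul_eq_zero.mp h2 with h' | h'
    · exact hμ0 h'
    · exact hxy (sub_eq_zero.mp h')
  · have hμsum : μ * (ρ (x₀:α) + ρ (y₀:α)) = (X.card : ℚ) - 1 := by
      calc μ * (ρ (x₀:α) + ρ (y₀:α))
          = ((X.card:ℚ) - 1) * (β * (ρ (x₀:α) + ρ (y₀:α))) := by simp only [μ]; ring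
        _ = (X.card:ℚ) - 1 := by rw [hsum2]; ring
    have hc : (((L.filter (fun B => (x₀:α) ∈ B)).card
        + (L.filter (fun B => (y₀:α) ∈ B)).card : ℕ) : ℚ) = ((X.card + 1 : ℕ) : ℚ) := by
      push_cast
      rw [hRepl x₀, hRepl y₀]
      linarith [hμsum]
    exact_mod_cast hc
  · intro x hx
    have hquadx := hQuad ⟨x, hx⟩
    simp only at hquadx
    by_cases h : ρ x = ρ (x₀:α)
    · left
      have h1 : ((L.filter (fun B => x ∈ B)).card : ℚ)
          = ((L.filter (fun B => (x₀:α) ∈ B)).card : ℚ) := by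
        have := hRepl ⟨x, hx⟩
        simp only at this
        rw [this, hRepl x₀, h]
      exact_mod_cast h1
    · right
      have hz : (ρ x - ρ (x₀:α)) * (1 - β * (ρ x + ρ (x₀:α))) = 0 := by
        linear_combination hquadx - hQuad x₀
      have hbx : β * (ρ x + ρ (x₀:α)) = 1 := by
        rcases mul_eq_zero.mp hz with h' | h'
        · exact absurd (sub_eq_zero.mp h') h
        · linarith
      have hxx : ρ x = ρ (y₀:α) := by
        have h5 := hbx.trans hsum2.symm
        have h6 : β * (ρ x - ρ (y₀:α)) = 0 := by linarith [h5]
        rcases mul_eq_zero.mp h6 with h' | h'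
        · exact absurd h' hβpos.ne'
        · linarith [sub_eq_zero.mp h']
      have h1 : ((L.filter (fun B => x ∈ B)).card : ℚ)
          = ((L.filter (fun B => (y₀:α) ∈ B)).card : ℚ) := by
        have := hRepl ⟨x, hx⟩
        simp only at this
        rw [this, hRepl y₀, hxx]
      exact_mod_cast h1

/-- **Ryser–Woodall theorem.** In a Ryser design of order `v` there are integers
`r₁ ≠ r₂` with `r₁ + r₂ = v + 1` such that every point occurs in exactly `r₁`
or exactly `r₂` blocks. -/
theorem ryser_woodall {α : Type*} [DecidableEq α] (v lam : ℕ)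
    (X : Finset α) (L : Finset (Finset α)) (hX : X.card = v)
    (hD : IsRyserDesign X L lam) :
    ∃ r₁ r₂ : ℕ, r₁ ≠ r₂ ∧ r₁ + r₂ = v + 1 ∧
      ∀ x ∈ X, repl L x = r₁ ∨ repl L x = r₂ := by
  subst hX
  unfold IsRyserDesign at hD
  obtain ⟨h1, h2, h3, h4, h5, h6⟩ := hD
  obtain ⟨r₁, r₂, ha, hb, hc⟩ := ryser_woodall' lam X L h1 h2 h3 h4 h5 h6
  exact ⟨r₁, r₂, ha, hb, fun x hx => hc x hx⟩
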